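/- The inclusions P ∩ Q ≤ R and R ≤ P + Q hold. -/

import Mathlib

open Submodule

/-- `X` belongs to the Grassmannian 𝒢: `X` is isomorphic (as a `K`-vector space)
to the quotient `V ⧸ X`, equivalently to one (hence every) complement of `X`. -/
def InG (K V : Type*) [DivisionRing K] [AddCommGroup V] [Module K V]
    (X : Submodule K V) : Prop :=
  Nonempty (X ≃ₗ[K] (V ⧸ X))

/-- `quotRank K V A B` is the dimension of the quotient space `B / (A ∩ B)`,
where `A ∩ B` is viewed as a subspace of `B`.  For `A ≤ B` this is `dim (B/A)`. -/
noncomputable def quotRank (K V : Type*) [DivisionRing K] [AddCommGroup V] [Module K V]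
    (A B : Submodule K V) : Cardinal :=
  Module.rank K (↥B ⧸ (A.comap B.subtype))

/-- `X` and `Y` are adjacent: `dim ((X+Y)/X) = dim ((X+Y)/Y) = 1`. -/
def Adjacent (K V : Type*) [DivisionRing K] [AddCommGroup V] [Module K V]
    (X Y : Submodule K V) : Prop :=
  quotRank K V X (X ⊔ Y) = 1 ∧ quotRank K V Y (X ⊔ Y) = 1

section Aux

variable {K V : Type*} [DivisionRing K] [AddCommGroup V] [Module K V]

/-- Any subspace disjoint from `R` is contained in a complement of `R`. -/
theorem ext_compl (S R : Submodule K V) (h : Disjoint S R) :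
    ∃ X : Submodule K V, S ≤ X ∧ IsCompl X R := by
  obtain ⟨Y, hY⟩ := Submodule.exists_isCompl (S ⊔ R)
  refine ⟨S ⊔ Y, le_sup_left, ?_, ?_⟩
  · rw [disjoint_def]
    intro x hx hxR
    obtain ⟨s, hs, y, hy, rfl⟩ := mem_sup.mp hx
    have hy' : y ∈ S ⊔ R := by
      have hrw : y = (s + y) - s := by abel
      rw [hrw]
      exact sub_mem (le_sup_right (α := Submodule K V) hxR) (le_sup_left (α := Submodule K V) hs)
    have hy0 : y = 0 := disjoint_def.mp hY.disjoint y hy' hy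
    have hs0 : s = 0 := disjoint_def.mp h s hs (by simpa [hy0] using hxR)
    simp [hy0, hs0]
  · rw [codisjoint_iff]
    have : S ⊔ Y ⊔ R = S ⊔ R ⊔ Y := by
      rw [sup_assoc, sup_assoc, sup_comm Y R]
    rw [this, codisjoint_iff.mp hY.codisjoint]

/-- A complement of an element of 𝒢 is again in 𝒢. -/
theorem InG_of_isCompl {R X : Submodule K V} (hR : InG K V R) (h : IsCompl X R) :
    InG K V X := by
  obtain ⟨e3⟩ := hR
  have e1 : (V ⧸ R) ≃ₗ[K] X := Submodule.quotientEquivOfIsCompl R X h.symm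
  have e2 : (V ⧸ X) ≃ₗ[K] R := Submodule.quotientEquivOfIsCompl X R h
  exact ⟨e1.symm.trans (e3.symm.trans e2.symm)⟩

/-- Modify a complement `X` of `R`: replace the line `span{w}` (for `w ∈ X`) by
`span{w - u}` with `u ∈ R`, keeping a prescribed subspace `S ≤ X` disjoint from
`span{w}`. The result is again a complement of `R`. -/
theorem graphmod (X R : Submodule K V) (hXR : IsCompl X R) (w u : V)
    (hw : w ∈ X) (hw0 : w ≠ 0) (hu : u ∈ R)
    (S : Submodule K V) (hSX : S ≤ X) (hSw : Disjoint S (span K {w})) :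
    ∃ X' : Submodule K V, IsCompl X' R ∧ S ≤ X' ∧ (w - u) ∈ X' := by
  classical
  set w' : X := ⟨w, hw⟩ with hw'def
  have hdisj' : Disjoint (S.comap X.subtype) (span K {w'}) := by
    rw [disjoint_def]
    intro x hx hx2
    obtain ⟨a, ha⟩ := mem_span_singleton.mp hx2
    have hxs : (x : V) ∈ S := hx
    have hxw : (x : V) ∈ span K {w} := by
      rw [← ha]
      exact mem_span_singleton.mpr ⟨a, rfl⟩
    have : (x : V) = 0 := disjoint_def.mp hSw _ hxs hxw
    exact Subtype.ext this
  obtain ⟨Ht, hSHt, hHt⟩ := ext_compl (S.comap X.subtype) (span K {w'}) hdisj'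
  set H : Submodule K V := Ht.map X.subtype with hHdef
  have hHX : H ≤ X := by
    rintro x ⟨y, _, rfl⟩; exact y.2
  have hSH : S ≤ H := by
    intro s hs
    exact ⟨⟨s, hSX hs⟩, hSHt hs, rfl⟩
  have hHw : Disjoint H (span K {w}) := by
    rw [disjoint_def]
    rintro x ⟨y, hy, rfl⟩ hx2
    obtain ⟨a, ha⟩ := mem_span_singleton.mp hx2
    have hyw : y ∈ span K {w'} := by
      refine mem_span_singleton.mpr ⟨a, ?_⟩
      apply Subtype.ext
      simpa using ha
    have : y = 0 := disjoint_def.mp hHt.disjoint y hy hyw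
    simp [this]
  have hsup : H ⊔ span K {w} = X := by
    have := codisjoint_iff.mp hHt.codisjoint
    have hmap : (Ht ⊔ span K {w'}).map X.subtype = (⊤ : Submodule K X).map X.subtype := by
      rw [this]
    rw [Submodule.map_sup, Submodule.map_top, Submodule.range_subtype] at hmap
    have hspan : (span K {w'}).map X.subtype = span K {w} := by
      rw [Submodule.map_span]
      simp
      rfl
    rw [hspan] at hmap
    exact hmap
  refine ⟨H ⊔ span K {w - u}, ⟨?_, ?_⟩, le_trans hSH le_sup_left,
    le_sup_right (α := Submodule K V) (mem_span_singleton_self _)⟩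
  · -- disjointness with R
    rw [disjoint_def]
    intro x hx hxR
    obtain ⟨h, hh, z, hz, rfl⟩ := mem_sup.mp hx
    obtain ⟨a, ha⟩ := mem_span_singleton.mp hz
    have key : h + a • w = (h + z) + a • u := by
      rw [← ha]; rw [smul_sub]; abel
    have hmem1 : h + a • w ∈ X :=
      add_mem (hHX hh) (smul_mem _ _ hw)
    have hmem2 : h + a • w ∈ R := by
      rw [key]; exact add_mem hxR (smul_mem _ _ hu)
    have h0 : h + a • w = 0 := disjoint_def.mp hXR.disjoint _ hmem1 hmem2
    have hh' : h = -(a • w) := by linear_combination (norm := abel) h0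
    have hhw : h ∈ span K {w} := by
      rw [hh']
      exact neg_mem (mem_span_singleton.mpr ⟨a, rfl⟩)
    have hhz : h = 0 := disjoint_def.mp hHw h hh hhw
    have haw : a • w = 0 := by
      rw [hhz] at h0; simpa using h0
    have ha0 : a = 0 := by
      rcases smul_eq_zero.mp haw with h' | h'
      · exact h'
      · exact absurd h' hw0
    rw [hhz, ← ha, ha0]
    simp
  · -- codisjointness with R
    rw [codisjoint_iff, eq_top_iff, ← codisjoint_iff.mp hXR.codisjoint, ← hsup]
    refine sup_le (sup_le (le_trans le_sup_left le_sup_left) ?_) ?_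
    · rw [span_le]
      intro x hx
      have hxw : x = w := Set.mem_singleton_iff.mp hx
      have : x = (w - u) + u := by rw [hxw]; abel
      rw [this]
      exact add_mem
        (le_sup_left (α := Submodule K V)
          (le_sup_right (α := Submodule K V) (mem_span_singleton_self _)))
        (le_sup_right (α := Submodule K V) hu)
    · exact le_sup_right

theorem not_isCompl_of_ne_zero_mem {A B : Submodule K V} {x : V}
    (hx : x ≠ 0) (h1 : x ∈ A) (h2 : x ∈ B) : ¬ IsCompl A B := fun h =>
  hx (disjoint_def.mp h.disjoint x h1 h2)

/-- Key step for `R ≤ P ⊔ Q`. -/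
theorem key_step (P Q R : Submodule K V)
    (hmain : ∀ X : Submodule K V, InG K V X → IsCompl X R → (IsCompl X P ∨ IsCompl X Q))
    (hR : InG K V R) (v : V) (hvR : v ∈ R) (hvPQ : v ∉ P ⊔ Q)
    (X : Submodule K V) (hXR : IsCompl X R) (hXP : IsCompl X P) : False := by
  obtain ⟨x₁, hx₁, p₁, hp₁, hvdec⟩ :=
    (mem_sup.mp (by rw [codisjoint_iff.mp hXP.codisjoint]; exact mem_top) :
      ∃ y ∈ X, ∃ z ∈ P, y + z = v)
  have hv0 : v ≠ 0 := fun h => hvPQ (h ▸ zero_mem _)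
  have hp₁0 : p₁ ≠ 0 := by
    rintro rfl
    rw [add_zero] at hvdec
    exact hv0 (disjoint_def.mp hXR.disjoint v (hvdec ▸ hx₁) hvR)
  have hx₁0 : x₁ ≠ 0 := by
    rintro rfl
    rw [zero_add] at hvdec
    exact hvPQ (le_sup_left (α := Submodule K V) (hvdec ▸ hp₁))
  obtain ⟨X', hX'R, -, hmem'⟩ :=
    graphmod X R hXR x₁ v hx₁ hx₁0 hvR ⊥ bot_le disjoint_bot_left
  have hnegp : x₁ - v = -p₁ := by linear_combination (norm := abel) hvdec
  have hp₁X' : -p₁ ∈ X' := hnegp ▸ hmem'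
  have hnegp0 : (-p₁ : V) ≠ 0 := fun h => hp₁0 (neg_eq_zero.mp h)
  have hX'G : InG K V X' := InG_of_isCompl hR hX'R
  have hX'Q : IsCompl X' Q := by
    rcases hmain X' hX'G hX'R with h | h
    · exact absurd h (not_isCompl_of_ne_zero_mem hnegp0 hp₁X' (neg_mem hp₁))
    · exact h
  obtain ⟨x₂, hx₂, q₂, hq₂, hvdec₂⟩ :=
    (mem_sup.mp (by rw [codisjoint_iff.mp hX'Q.codisjoint]; exact mem_top) :
      ∃ y ∈ X', ∃ z ∈ Q, y + z = v)
  have hq₂0 : q₂ ≠ 0 := by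
    rintro rfl
    rw [add_zero] at hvdec₂
    exact hv0 (disjoint_def.mp hX'R.disjoint v (hvdec₂ ▸ hx₂) hvR)
  have hx₂0 : x₂ ≠ 0 := by
    rintro rfl
    rw [zero_add] at hvdec₂
    exact hvPQ (le_sup_right (α := Submodule K V) (hvdec₂ ▸ hq₂))
  have hpnotspan : -p₁ ∉ span K {x₂} := by
    intro hmem
    obtain ⟨b, hb⟩ := mem_span_singleton.mp hmem
    have hb0 : b ≠ 0 := by
      rintro rfl
      rw [zero_smul] at hb
      exact hnegp0 hb.symm
    have : v ∈ P ⊔ Q := by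
      have hx₂eq : x₂ = v - q₂ := by linear_combination (norm := abel) hvdec₂
      have hbv : b • v = b • q₂ - p₁ := by
        rw [hx₂eq, smul_sub] at hb
        linear_combination (norm := abel) hb
      have : v = b⁻¹ • (b • q₂ - p₁) := by
        rw [← hbv, smul_smul, inv_mul_cancel₀ hb0, one_smul]
      rw [this]
      exact smul_mem _ _ (sub_mem
        (le_sup_right (α := Submodule K V) (smul_mem _ _ hq₂))
        (le_sup_left (α := Submodule K V) hp₁))
    exact hvPQ this
  have hdisj2 : Disjoint (span K {-p₁}) (span K {x₂}) := by
    rw [disjoint_def]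
    intro x hx1 hx2
    obtain ⟨a, ha⟩ := mem_span_singleton.mp hx1
    have ha0 : a = 0 := by
      by_contra hne
      exact hpnotspan (by
        have : -p₁ = a⁻¹ • x := by rw [← ha, smul_smul, inv_mul_cancel₀ hne, one_smul]
        rw [this]
        exact smul_mem _ _ hx2)
    rw [← ha, ha0, zero_smul]
  have hspanle : span K {-p₁} ≤ X' := by
    rw [span_le, Set.singleton_subset_iff]
    exact hp₁X'
  obtain ⟨X'', hX''R, hSX'', hmem''⟩ :=
    graphmod X' R hX'R x₂ v hx₂ hx₂0 hvR (span K {-p₁}) hspanle hdisj2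
  have hnegq : x₂ - v = -q₂ := by linear_combination (norm := abel) hvdec₂
  have hq₂X'' : -q₂ ∈ X'' := hnegq ▸ hmem''
  have hp₁X'' : -p₁ ∈ X'' := hSX'' (mem_span_singleton_self _)
  have hnegq0 : (-q₂ : V) ≠ 0 := fun h => hq₂0 (neg_eq_zero.mp h)
  rcases hmain X'' (InG_of_isCompl hR hX''R) hX''R with h | h
  · exact not_isCompl_of_ne_zero_mem hnegp0 hp₁X'' (neg_mem hp₁) h
  · exact not_isCompl_of_ne_zero_mem hnegq0 hq₂X'' (neg_mem hq₂) h

end Aux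

/-- The inclusions `P ∩ Q ≤ R` and `R ≤ P + Q` hold. -/
theorem stmt_4 (K V : Type*) [DivisionRing K] [AddCommGroup V] [Module K V]
    (P Q R : Submodule K V) (hP : InG K V P) (hQ : InG K V Q) (hR : InG K V R)
    (hRP : R ≠ P) (hRQ : R ≠ Q)
    (hmain : ∀ X : Submodule K V, InG K V X → IsCompl X R → (IsCompl X P ∨ IsCompl X Q)) :
    P ⊓ Q ≤ R ∧ R ≤ P ⊔ Q := by
  constructor
  · intro v hv
    by_contra hvR
    have hv0 : v ≠ 0 := fun h => hvR (h ▸ zero_mem R)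
    have hdisj : Disjoint (span K {v}) R := by
      rw [disjoint_def]
      intro x hx hxR
      obtain ⟨a, ha⟩ := mem_span_singleton.mp hx
      have ha0 : a = 0 := by
        by_contra hne
        exact hvR (by
          have : v = a⁻¹ • x := by rw [← ha, smul_smul, inv_mul_cancel₀ hne, one_smul]
          rw [this]; exact smul_mem _ _ hxR)
      rw [← ha, ha0, zero_smul]
    obtain ⟨X, hle, hcompl⟩ := ext_compl (span K {v}) R hdisj
    have hvX : v ∈ X := hle (mem_span_singleton_self _)
    rcases hmain X (InG_of_isCompl hR hcompl) hcompl with h | h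
    · exact not_isCompl_of_ne_zero_mem hv0 hvX hv.1 h
    · exact not_isCompl_of_ne_zero_mem hv0 hvX hv.2 h
  · intro v hvR
    by_contra hvPQ
    obtain ⟨Y, hY⟩ := Submodule.exists_isCompl R
    rcases hmain Y (InG_of_isCompl hR hY.symm) hY.symm with h | h
    · exact key_step P Q R hmain hR v hvR hvPQ Y hY.symm h
    · exact key_step Q P R (fun X h1 h2 => (hmain X h1 h2).symm) hR v hvR
        (by rwa [sup_comm] at hvPQ) Y hY.symm h
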